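/- arXiv:2203.11448 — 4 statements merged into one kernel-verified Lean document; each statement's English description precedes it below -/
import Mathlib

section
/- Suppose z1, z2, z3, z4, z5 ∈ {0,1} satisfy z1 + z2 + z3 + z4 + z5 ≤ 4, and the real numbers V, Q together with a real number M satisfy all of the Big-M constraints (21)–(30). Then Q = f(V), i.e., the Big-M mixed-integer constraints force the inverter's reactive power output to lie exactly on the IEEE 1547-2018 Volt-VAr droop curve. -/
/-- The IEEE 1547-2018 Volt-VAr droop characteristic (Q–V curve) of a PV smart inverter. -/
noncomputable def voltVarDroop (Qmax V1 V2 V3 V4 : ℝ) (V : ℝ) : ℝ :=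
  if V < V1 then Qmax
  else if V < V2 then Qmax * (V2 - V) / (V2 - V1)
  else if V < V3 then 0
  else if V < V4 then -Qmax * (V - V3) / (V4 - V3)
  else -Qmax

/-- The Big-M constraints (21)–(30) on the voltage `V`, reactive power `Q`, and
binary indicator variables `z1,…,z5` of the five operating zones. -/
def BigMConstraints (Qmax V1 V2 V3 V4 M V Q z1 z2 z3 z4 z5 : ℝ) : Prop :=
  -- (21)
  V ≤ V1 + M * z1 ∧
  -- (22)
  (Qmax - M * z1 ≤ Q ∧ Q ≤ Qmax + M * z1) ∧
  -- (23)
  (V1 - M * z2 ≤ V ∧ V ≤ V2 + M * z2) ∧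
  -- (24)
  (-(M * z2) ≤ Q - Qmax * (V2 - V) / (V2 - V1) ∧
    Q - Qmax * (V2 - V) / (V2 - V1) ≤ M * z2) ∧
  -- (25)
  (V2 - M * z3 ≤ V ∧ V ≤ V3 + M * z3) ∧
  -- (26)
  (-(M * z3) ≤ Q ∧ Q ≤ M * z3) ∧
  -- (27)
  (V3 - M * z4 ≤ V ∧ V ≤ V4 + M * z4) ∧
  -- (28)
  (-(M * z4) ≤ Q + Qmax * (V - V3) / (V4 - V3) ∧
    Q + Qmax * (V - V3) / (V4 - V3) ≤ M * z4) ∧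
  -- (29)
  V4 - M * z5 ≤ V ∧
  -- (30)
  (-(M * z5) ≤ Q + Qmax ∧ Q + Qmax ≤ M * z5)


section aux
variable {Qmax V1 V2 V3 V4 V Q : ℝ}

lemma zone1 (h12 : V1 < V2) (hV : V ≤ V1) (hQ : Q = Qmax) :
    Q = voltVarDroop Qmax V1 V2 V3 V4 V := by
  unfold voltVarDroop
  split_ifs with c1 c2 c3 c4
  · exact hQ
  · have : V = V1 := le_antisymm hV (not_lt.mp c1)
    rw [hQ, this, mul_div_assoc, div_self (ne_of_gt (sub_pos.mpr h12)), mul_one]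
  all_goals exact absurd (lt_of_le_of_lt hV h12) c2

lemma zone2 (h12 : V1 < V2) (h23 : V2 < V3) (hVa : V1 ≤ V) (hVb : V ≤ V2)
    (hQ : Q = Qmax * (V2 - V) / (V2 - V1)) :
    Q = voltVarDroop Qmax V1 V2 V3 V4 V := by
  unfold voltVarDroop
  split_ifs with c1 c2 c3 c4
  · exact absurd c1 (not_lt.mpr hVa)
  · exact hQ
  · have : V = V2 := le_antisymm hVb (not_lt.mp c2)
    rw [hQ, this]; simp
  all_goals exact absurd (lt_of_le_of_lt hVb h23) c3

lemma zone3 (h12 : V1 < V2) (h34 : V3 < V4) (hVa : V2 ≤ V) (hVb : V ≤ V3)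
    (hQ : Q = 0) :
    Q = voltVarDroop Qmax V1 V2 V3 V4 V := by
  unfold voltVarDroop
  split_ifs with c1 c2 c3 c4
  · exact absurd (lt_trans c1 h12) (not_lt.mpr hVa)
  · exact absurd c2 (not_lt.mpr hVa)
  · exact hQ
  · have : V = V3 := le_antisymm hVb (not_lt.mp c3)
    rw [hQ, this]; simp
  · exact absurd (lt_of_le_of_lt hVb h34) c4

lemma zone4 (h12 : V1 < V2) (h23 : V2 < V3) (h34 : V3 < V4) (hVa : V3 ≤ V) (hVb : V ≤ V4)
    (hQ : Q = -Qmax * (V - V3) / (V4 - V3)) :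
    Q = voltVarDroop Qmax V1 V2 V3 V4 V := by
  unfold voltVarDroop
  have hV2 : V2 ≤ V := le_trans (le_of_lt h23) hVa
  split_ifs with c1 c2 c3 c4
  · exact absurd (lt_trans (lt_trans c1 h12) h23) (not_lt.mpr hVa)
  · exact absurd c2 (not_lt.mpr hV2)
  · exact absurd c3 (not_lt.mpr hVa)
  · exact hQ
  · have hV4 : V = V4 := le_antisymm hVb (not_lt.mp c4)
    have hne : V4 - V3 ≠ 0 := ne_of_gt (by linarith)
    rw [hQ, hV4]
    field_simp

lemma zone5 (h34 : V3 < V4) (h12 : V1 < V2) (h23 : V2 < V3) (hV : V4 ≤ V) (hQ : Q = -Qmax) :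
    Q = voltVarDroop Qmax V1 V2 V3 V4 V := by
  unfold voltVarDroop
  have h1 : V1 < V := by linarith
  have h2 : V2 < V := by linarith
  have h3 : V3 < V := by linarith
  split_ifs with c1 c2 c3 c4
  · exact absurd c1 (not_lt.mpr (le_of_lt h1))
  · exact absurd c2 (not_lt.mpr (le_of_lt h2))
  · exact absurd c3 (not_lt.mpr (le_of_lt h3))
  · exact absurd c4 (not_lt.mpr hV)
  · exact hQ

end aux

/-- the Big-M mixed-integer constraints (21)–(31) force the inverter's
reactive power output to lie exactly on the IEEE 1547-2018 Volt-VAr droop curve. -/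
theorem bigM_forces_droop
    (Qmax V1 V2 V3 V4 M V Q z1 z2 z3 z4 z5 : ℝ)
    (hQmax : 0 < Qmax) (h12 : V1 < V2) (h23 : V2 < V3) (h34 : V3 < V4)
    (hz1 : z1 = 0 ∨ z1 = 1) (hz2 : z2 = 0 ∨ z2 = 1) (hz3 : z3 = 0 ∨ z3 = 1)
    (hz4 : z4 = 0 ∨ z4 = 1) (hz5 : z5 = 0 ∨ z5 = 1)
    (hsum : z1 + z2 + z3 + z4 + z5 ≤ 4)
    (hbig : BigMConstraints Qmax V1 V2 V3 V4 M V Q z1 z2 z3 z4 z5) :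
    Q = voltVarDroop Qmax V1 V2 V3 V4 V := by
  obtain ⟨h21, ⟨h22a, h22b⟩, ⟨h23a, h23b⟩, ⟨h24a, h24b⟩, ⟨h25a, h25b⟩,
    ⟨h26a, h26b⟩, ⟨h27a, h27b⟩, ⟨h28a, h28b⟩, h29, h30a, h30b⟩ := hbig
  have hzero : z1 = 0 ∨ z2 = 0 ∨ z3 = 0 ∨ z4 = 0 ∨ z5 = 0 := by
    rcases hz1 with h1 | h1
    · exact Or.inl h1
    rcases hz2 with h2 | h2
    · exact Or.inr (Or.inl h2)
    rcases hz3 with h3 | h3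
    · exact Or.inr (Or.inr (Or.inl h3))
    rcases hz4 with h4 | h4
    · exact Or.inr (Or.inr (Or.inr (Or.inl h4)))
    rcases hz5 with h5 | h5
    · exact Or.inr (Or.inr (Or.inr (Or.inr h5)))
    exfalso; rw [h1, h2, h3, h4, h5] at hsum; norm_num at hsum
  rcases hzero with h | h | h | h | h
  · rw [h, mul_zero] at h21 h22a h22b
    exact zone1 h12 (by linarith) (by linarith)
  · rw [h, mul_zero] at h23a h23b h24a h24b
    exact zone2 h12 h23 (by linarith) (by linarith) (by linarith)
  · rw [h, mul_zero] at h25a h25b h26a h26b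
    exact zone3 h12 h34 (by linarith) (by linarith) (by linarith)
  · rw [h, mul_zero] at h27a h27b h28a h28b
    have key : Q = -(Qmax * (V - V3) / (V4 - V3)) := by linarith
    exact zone4 h12 h23 h34 (by linarith) (by linarith) (by rw [key]; ring)
  · rw [h, mul_zero] at h29 h30a h30b
    exact zone5 h34 h12 h23 (by linarith) (by linarith)
end

section
/- Let Vmin ≤ V1 and V4 ≤ Vmax, let V be a real number with Vmin ≤ V ≤ Vmax, let Q = f(V), and let M ≥ 2·Qmax + (Vmax − Vmin)·(1 + Qmax/min(V2 − V1, V4 − V3)). Then there exist binaries z1, z2, z3, z4, z5 ∈ {0,1} with z1 + z2 + z3 + z4 + z5 ≤ 4 such that all of the Big-M constraints (21)–(30) are satisfied. In other words, every point on the Volt-VAr droop curve is feasible for the Big-M mixed-integer formulation when M is sufficiently large. -/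
set_option maxHeartbeats 1000000


/-- every point on the Volt-VAr droop curve is feasible for the Big-M
mixed-integer formulation (21)–(31) when `M` is sufficiently large. -/
theorem droop_feasible_for_bigM
    (Qmax V1 V2 V3 V4 Vmin Vmax M V Q : ℝ)
    (hQmax : 0 < Qmax) (h12 : V1 < V2) (h23 : V2 < V3) (h34 : V3 < V4)
    (hVmin : Vmin ≤ V1) (hVmax : V4 ≤ Vmax)
    (hVlo : Vmin ≤ V) (hVhi : V ≤ Vmax)
    (hQ : Q = voltVarDroop Qmax V1 V2 V3 V4 V)
    (hM : 2 * Qmax + (Vmax - Vmin) * (1 + Qmax / min (V2 - V1) (V4 - V3)) ≤ M) :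
    ∃ z1 z2 z3 z4 z5 : ℝ,
      (z1 = 0 ∨ z1 = 1) ∧ (z2 = 0 ∨ z2 = 1) ∧ (z3 = 0 ∨ z3 = 1) ∧
      (z4 = 0 ∨ z4 = 1) ∧ (z5 = 0 ∨ z5 = 1) ∧
      z1 + z2 + z3 + z4 + z5 ≤ 4 ∧
      BigMConstraints Qmax V1 V2 V3 V4 M V Q z1 z2 z3 z4 z5 := by
  have hd2 : (0:ℝ) < V2 - V1 := by linarith
  have hd4 : (0:ℝ) < V4 - V3 := by linarith
  have hm : (0:ℝ) < min (V2 - V1) (V4 - V3) := lt_min hd2 hd4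
  have hW : (0:ℝ) ≤ Vmax - Vmin := by linarith
  have hr2 : (0:ℝ) ≤ Qmax / (V2 - V1) := div_nonneg hQmax.le hd2.le
  have hr4 : (0:ℝ) ≤ Qmax / (V4 - V3) := div_nonneg hQmax.le hd4.le
  have hr2m : Qmax / (V2 - V1) ≤ Qmax / min (V2 - V1) (V4 - V3) := by
    gcongr
    exact min_le_left _ _
  have hr4m : Qmax / (V4 - V3) ≤ Qmax / min (V2 - V1) (V4 - V3) := by
    gcongr
    exact min_le_right _ _
  have hexp : (Vmax - Vmin) * (1 + Qmax / min (V2 - V1) (V4 - V3))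
      = (Vmax - Vmin) + Qmax / min (V2 - V1) (V4 - V3) * (Vmax - Vmin) := by ring
  have hmul2 : Qmax / (V2 - V1) * (Vmax - Vmin)
      ≤ Qmax / min (V2 - V1) (V4 - V3) * (Vmax - Vmin) :=
    mul_le_mul_of_nonneg_right hr2m hW
  have hmul4 : Qmax / (V4 - V3) * (Vmax - Vmin)
      ≤ Qmax / min (V2 - V1) (V4 - V3) * (Vmax - Vmin) :=
    mul_le_mul_of_nonneg_right hr4m hW
  have hr2W : (0:ℝ) ≤ Qmax / (V2 - V1) * (Vmax - Vmin) := mul_nonneg hr2 hW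
  have hr4W : (0:ℝ) ≤ Qmax / (V4 - V3) * (Vmax - Vmin) := mul_nonneg hr4 hW
  have hM2 : Qmax + Qmax / (V2 - V1) * (Vmax - Vmin) ≤ M := by
    nlinarith [mul_nonneg (div_nonneg hQmax.le hm.le) hW]
  have hM4 : Qmax + Qmax / (V4 - V3) * (Vmax - Vmin) ≤ M := by
    nlinarith [mul_nonneg (div_nonneg hQmax.le hm.le) hW]
  have hMv : Vmax - Vmin ≤ M := by
    nlinarith [mul_nonneg (div_nonneg hQmax.le hm.le) hW]
  have hMq : 2 * Qmax ≤ M := by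
    nlinarith [mul_nonneg (div_nonneg hQmax.le hm.le) hW]
  -- bounds on the slope terms
  have heq2 : Qmax * (V2 - V) / (V2 - V1) = Qmax / (V2 - V1) * (V2 - V) := by ring
  have heq4 : Qmax * (V - V3) / (V4 - V3) = Qmax / (V4 - V3) * (V - V3) := by ring
  have h24u : Qmax * (V2 - V) / (V2 - V1) ≤ Qmax / (V2 - V1) * (Vmax - Vmin) := by
    rw [heq2]
    exact mul_le_mul_of_nonneg_left (by linarith) hr2
  have h24l : -(Qmax / (V2 - V1) * (Vmax - Vmin)) ≤ Qmax * (V2 - V) / (V2 - V1) := by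
    rw [heq2]
    nlinarith [mul_le_mul_of_nonneg_left (show -(Vmax - Vmin) ≤ V2 - V by linarith) hr2]
  have h28u : Qmax * (V - V3) / (V4 - V3) ≤ Qmax / (V4 - V3) * (Vmax - Vmin) := by
    rw [heq4]
    exact mul_le_mul_of_nonneg_left (by linarith) hr4
  have h28l : -(Qmax / (V4 - V3) * (Vmax - Vmin)) ≤ Qmax * (V - V3) / (V4 - V3) := by
    rw [heq4]
    nlinarith [mul_le_mul_of_nonneg_left (show -(Vmax - Vmin) ≤ V - V3 by linarith) hr4]
  rcases lt_or_ge V V1 with h1 | h1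
  · -- zone 1
    rw [voltVarDroop, if_pos h1] at hQ
    refine ⟨0, 1, 1, 1, 1, Or.inl rfl, Or.inr rfl, Or.inr rfl, Or.inr rfl, Or.inr rfl,
      by norm_num, ?_⟩
    unfold BigMConstraints
    norm_num
    constructorm* _ ∧ _ <;> linarith
  rcases lt_or_ge V V2 with h2 | h2
  · -- zone 2
    rw [voltVarDroop, if_neg (not_lt.2 h1), if_pos h2] at hQ
    have hq0 : 0 ≤ Q := by rw [hQ]; exact div_nonneg (mul_nonneg hQmax.le (by linarith)) hd2.le
    have hq1 : Q ≤ Qmax := by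
      rw [hQ, div_le_iff₀ hd2]; nlinarith
    refine ⟨1, 0, 1, 1, 1, Or.inr rfl, Or.inl rfl, Or.inr rfl, Or.inr rfl, Or.inr rfl,
      by norm_num, ?_⟩
    unfold BigMConstraints
    norm_num
    constructorm* _ ∧ _ <;> linarith
  rcases lt_or_ge V V3 with h3 | h3
  · -- zone 3
    rw [voltVarDroop, if_neg (not_lt.2 h1), if_neg (not_lt.2 h2), if_pos h3] at hQ
    refine ⟨1, 1, 0, 1, 1, Or.inr rfl, Or.inr rfl, Or.inl rfl, Or.inr rfl, Or.inr rfl,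
      by norm_num, ?_⟩
    unfold BigMConstraints
    norm_num
    constructorm* _ ∧ _ <;> linarith
  rcases lt_or_ge V V4 with h4 | h4
  · -- zone 4
    rw [voltVarDroop, if_neg (not_lt.2 h1), if_neg (not_lt.2 h2), if_neg (not_lt.2 h3),
      if_pos h4] at hQ
    rw [neg_mul, neg_div] at hQ
    have haux : 0 ≤ Qmax * (V - V3) / (V4 - V3) :=
      div_nonneg (mul_nonneg hQmax.le (by linarith)) hd4.le
    have haux2 : Qmax * (V - V3) / (V4 - V3) ≤ Qmax := by
      rw [div_le_iff₀ hd4]; nlinarith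
    have hq0 : Q ≤ 0 := by rw [hQ]; nlinarith
    have hq1 : -Qmax ≤ Q := by rw [hQ]; nlinarith
    refine ⟨1, 1, 1, 0, 1, Or.inr rfl, Or.inr rfl, Or.inr rfl, Or.inl rfl, Or.inr rfl,
      by norm_num, ?_⟩
    unfold BigMConstraints
    norm_num
    constructorm* _ ∧ _ <;> linarith
  · -- zone 5
    rw [voltVarDroop, if_neg (not_lt.2 h1), if_neg (not_lt.2 h2), if_neg (not_lt.2 h3),
      if_neg (not_lt.2 h4)] at hQ
    refine ⟨1, 1, 1, 1, 0, Or.inr rfl, Or.inr rfl, Or.inr rfl, Or.inr rfl, Or.inl rfl,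
      by norm_num, ?_⟩
    unfold BigMConstraints
    norm_num
    constructorm* _ ∧ _ <;> linarith
end

section
/- Let Vmin ≤ V1, V4 ≤ Vmax, let V be a real number with Vmin ≤ V ≤ Vmax, let Q be a real number, and let M ≥ 2·Qmax + (Vmax − Vmin)·(1 + Qmax/min(V2 − V1, V4 − V3)). Then there exist binaries z1, z2, z3, z4, z5 ∈ {0,1} satisfying the Big-M constraints (21)–(31) if and only if Q = f(V). That is, the mixed-integer linear system (21)–(31) is an exact reformulation of the piecewise-linear Volt-VAr droop characteristic (20). -/
private lemma term_bound' {Qmax num den m D : ℝ} (hQ : 0 ≤ Qmax) (hm : 0 < m)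
    (hmden : m ≤ den) (hnum : |num| ≤ D) : |Qmax * num / den| ≤ D * (Qmax / m) := by
  have hden : 0 < den := lt_of_lt_of_le hm hmden
  rw [abs_div, abs_mul, abs_of_nonneg hQ, abs_of_pos hden]
  have h1 : Qmax * |num| / den ≤ Qmax * D / m :=
    div_le_div₀ (mul_nonneg hQ (le_trans (abs_nonneg _) hnum))
      (mul_le_mul_of_nonneg_left hnum hQ) hm hmden
  calc Qmax * |num| / den ≤ Qmax * D / m := h1
    _ = D * (Qmax / m) := by ring

private lemma droop_bound' (Qmax V1 V2 V3 V4 V : ℝ) (hQ : 0 < Qmax)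
    (h12 : V1 < V2) (h34 : V3 < V4) :
    -Qmax ≤ voltVarDroop Qmax V1 V2 V3 V4 V ∧ voltVarDroop Qmax V1 V2 V3 V4 V ≤ Qmax := by
  unfold voltVarDroop
  split_ifs with h1 h2 h3 h4
  · exact ⟨by linarith, le_refl _⟩
  · push_neg at h1
    constructor
    · have : 0 ≤ Qmax * (V2 - V) / (V2 - V1) :=
        div_nonneg (mul_nonneg hQ.le (by linarith)) (by linarith)
      linarith
    · rw [div_le_iff₀ (by linarith : (0:ℝ) < V2 - V1)]
      nlinarith
  · exact ⟨by linarith, by linarith⟩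
  · push_neg at h3
    constructor
    · rw [le_div_iff₀ (by linarith : (0:ℝ) < V4 - V3)]
      nlinarith
    · have : 0 ≤ Qmax * (V - V3) / (V4 - V3) :=
        div_nonneg (mul_nonneg hQ.le (by linarith)) (by linarith)
      have he : -Qmax * (V - V3) / (V4 - V3) = -(Qmax * (V - V3) / (V4 - V3)) := by ring
      rw [he]
      linarith
  · exact ⟨le_refl _, by linarith⟩

set_option maxHeartbeats 1000000 in
/-- the mixed-integer linear system (21)–(31) is an exact reformulation
of the piecewise-linear Volt-VAr droop characteristic (20). -/
theorem bigM_exact_reformulation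
    (Qmax V1 V2 V3 V4 Vmin Vmax M V Q : ℝ)
    (hQmax : 0 < Qmax) (h12 : V1 < V2) (h23 : V2 < V3) (h34 : V3 < V4)
    (hVmin : Vmin ≤ V1) (hVmax : V4 ≤ Vmax)
    (hVlo : Vmin ≤ V) (hVhi : V ≤ Vmax)
    (hM : 2 * Qmax + (Vmax - Vmin) * (1 + Qmax / min (V2 - V1) (V4 - V3)) ≤ M) :
    (∃ z1 z2 z3 z4 z5 : ℝ,
      (z1 = 0 ∨ z1 = 1) ∧ (z2 = 0 ∨ z2 = 1) ∧ (z3 = 0 ∨ z3 = 1) ∧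
      (z4 = 0 ∨ z4 = 1) ∧ (z5 = 0 ∨ z5 = 1) ∧
      z1 + z2 + z3 + z4 + z5 ≤ 4 ∧
      BigMConstraints Qmax V1 V2 V3 V4 M V Q z1 z2 z3 z4 z5) ↔
    Q = voltVarDroop Qmax V1 V2 V3 V4 V := by
  constructor
  · rintro ⟨z1, z2, z3, z4, z5, hz1, hz2, hz3, hz4, hz5, hsum,
      c21, ⟨c22a, c22b⟩, ⟨c23a, c23b⟩, ⟨c24a, c24b⟩, ⟨c25a, c25b⟩, ⟨c26a, c26b⟩,
      ⟨c27a, c27b⟩, ⟨c28a, c28b⟩, c29, c30a, c30b⟩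
    have h5 : z1 = 0 ∨ z2 = 0 ∨ z3 = 0 ∨ z4 = 0 ∨ z5 = 0 := by
      by_contra h
      push_neg at h
      have e1 := hz1.resolve_left h.1
      have e2 := hz2.resolve_left h.2.1
      have e3 := hz3.resolve_left h.2.2.1
      have e4 := hz4.resolve_left h.2.2.2.1
      have e5 := hz5.resolve_left h.2.2.2.2
      rw [e1, e2, e3, e4, e5] at hsum
      norm_num at hsum
    rcases h5 with h | h | h | h | h <;> subst h
    · -- z1 = 0
      have hVle : V ≤ V1 := by linarith
      have hQv : Q = Qmax := le_antisymm (by linarith) (by linarith)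
      by_cases hb : V < V1
      · unfold voltVarDroop
        rw [if_pos hb]
        exact hQv
      · have hV : V = V1 := le_antisymm hVle (not_lt.1 hb)
        unfold voltVarDroop
        rw [if_neg hb, if_pos (show V < V2 by linarith), hQv, hV, mul_div_assoc,
          div_self (show V2 - V1 ≠ 0 by linarith), mul_one]
    · -- z2 = 0
      have hlo : V1 ≤ V := by linarith
      have hhi : V ≤ V2 := by linarith
      have hQe : Q - Qmax * (V2 - V) / (V2 - V1) = 0 :=
        le_antisymm (by linarith) (by linarith)
      by_cases hb : V < V2
      · unfold voltVarDroop
        rw [if_neg (not_lt.2 hlo), if_pos hb]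
        linarith
      · have hV : V = V2 := le_antisymm hhi (not_lt.1 hb)
        unfold voltVarDroop
        rw [if_neg (not_lt.2 hlo), if_neg hb, if_pos (show V < V3 by linarith)]
        rw [hV] at hQe
        simpa using hQe
    · -- z3 = 0
      have hlo : V2 ≤ V := by linarith
      have hhi : V ≤ V3 := by linarith
      have hQv : Q = 0 := le_antisymm (by linarith) (by linarith)
      by_cases hb : V < V3
      · unfold voltVarDroop
        rw [if_neg (not_lt.2 (show V1 ≤ V by linarith)), if_neg (not_lt.2 hlo), if_pos hb]
        exact hQv
      · have hV : V = V3 := le_antisymm hhi (not_lt.1 hb)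
        unfold voltVarDroop
        rw [if_neg (not_lt.2 (show V1 ≤ V by linarith)), if_neg (not_lt.2 hlo), if_neg hb,
          if_pos (show V < V4 by linarith), hQv, hV]
        simp
    · -- z4 = 0
      have hlo : V3 ≤ V := by linarith
      have hhi : V ≤ V4 := by linarith
      have hQe : Q + Qmax * (V - V3) / (V4 - V3) = 0 :=
        le_antisymm (by linarith) (by linarith)
      by_cases hb : V < V4
      · unfold voltVarDroop
        rw [if_neg (not_lt.2 (show V1 ≤ V by linarith)),
          if_neg (not_lt.2 (show V2 ≤ V by linarith)), if_neg (not_lt.2 hlo), if_pos hb]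
        have he : -Qmax * (V - V3) / (V4 - V3) = -(Qmax * (V - V3) / (V4 - V3)) := by ring
        rw [he]
        linarith
      · have hV : V = V4 := le_antisymm hhi (not_lt.1 hb)
        unfold voltVarDroop
        rw [if_neg (not_lt.2 (show V1 ≤ V by linarith)),
          if_neg (not_lt.2 (show V2 ≤ V by linarith)), if_neg (not_lt.2 hlo), if_neg hb]
        rw [hV] at hQe
        rw [mul_div_assoc, div_self (show V4 - V3 ≠ 0 by linarith), mul_one] at hQe
        linarith
    · -- z5 = 0
      have hlo : V4 ≤ V := by linarith
      have hQv : Q = -Qmax := le_antisymm (by linarith) (by linarith)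
      unfold voltVarDroop
      rw [if_neg (not_lt.2 (show V1 ≤ V by linarith)),
        if_neg (not_lt.2 (show V2 ≤ V by linarith)),
        if_neg (not_lt.2 (show V3 ≤ V by linarith)), if_neg (not_lt.2 hlo)]
      exact hQv
  · intro hfQ
    have hm : 0 < min (V2 - V1) (V4 - V3) := lt_min (by linarith) (by linarith)
    have hD0 : 0 ≤ Vmax - Vmin := by linarith
    have hMlin : 2 * Qmax + (Vmax - Vmin) +
        (Vmax - Vmin) * (Qmax / min (V2 - V1) (V4 - V3)) ≤ M := by
      have e : (Vmax - Vmin) * (1 + Qmax / min (V2 - V1) (V4 - V3)) =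
          (Vmax - Vmin) + (Vmax - Vmin) * (Qmax / min (V2 - V1) (V4 - V3)) := by ring
      linarith [hM, e.ge, e.le]
    have hprod0 : 0 ≤ (Vmax - Vmin) * (Qmax / min (V2 - V1) (V4 - V3)) :=
      mul_nonneg hD0 (div_nonneg hQmax.le hm.le)
    have hnum2 : |V2 - V| ≤ Vmax - Vmin := abs_le.2 ⟨by linarith, by linarith⟩
    have hnum4 : |V - V3| ≤ Vmax - Vmin := abs_le.2 ⟨by linarith, by linarith⟩
    have ht2 := term_bound' hQmax.le hm (min_le_left (V2 - V1) (V4 - V3)) hnum2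
    have ht4 := term_bound' hQmax.le hm (min_le_right (V2 - V1) (V4 - V3)) hnum4
    obtain ⟨ht2a, ht2b⟩ := abs_le.1 ht2
    obtain ⟨ht4a, ht4b⟩ := abs_le.1 ht4
    have hB := droop_bound' Qmax V1 V2 V3 V4 V hQmax h12 h34
    have hQlo : -Qmax ≤ Q := hfQ ▸ hB.1
    have hQhi : Q ≤ Qmax := hfQ ▸ hB.2
    by_cases hb1 : V < V1
    · have hQv : Q = Qmax := by rw [hfQ]; unfold voltVarDroop; rw [if_pos hb1]
      refine ⟨0, 1, 1, 1, 1, Or.inl rfl, Or.inr rfl, Or.inr rfl, Or.inr rfl, Or.inr rfl,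
        by norm_num, ?_⟩
      unfold BigMConstraints
      refine ⟨?_, ⟨?_, ?_⟩, ⟨?_, ?_⟩, ⟨?_, ?_⟩, ⟨?_, ?_⟩, ⟨?_, ?_⟩, ⟨?_, ?_⟩, ⟨?_, ?_⟩, ?_, ⟨?_, ?_⟩⟩ <;>
        linarith
    · by_cases hb2 : V < V2
      · have hQv : Q = Qmax * (V2 - V) / (V2 - V1) := by
          rw [hfQ]; unfold voltVarDroop; rw [if_neg hb1, if_pos hb2]
        have hlo : V1 ≤ V := not_lt.1 hb1
        refine ⟨1, 0, 1, 1, 1, Or.inr rfl, Or.inl rfl, Or.inr rfl, Or.inr rfl, Or.inr rfl,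
          by norm_num, ?_⟩
        unfold BigMConstraints
        refine ⟨?_, ⟨?_, ?_⟩, ⟨?_, ?_⟩, ⟨?_, ?_⟩, ⟨?_, ?_⟩, ⟨?_, ?_⟩, ⟨?_, ?_⟩, ⟨?_, ?_⟩, ?_, ⟨?_, ?_⟩⟩ <;>
          linarith
      · by_cases hb3 : V < V3
        · have hQv : Q = 0 := by
            rw [hfQ]; unfold voltVarDroop; rw [if_neg hb1, if_neg hb2, if_pos hb3]
          have hlo : V2 ≤ V := not_lt.1 hb2
          refine ⟨1, 1, 0, 1, 1, Or.inr rfl, Or.inr rfl, Or.inl rfl, Or.inr rfl, Or.inr rfl,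
            by norm_num, ?_⟩
          unfold BigMConstraints
          refine ⟨?_, ⟨?_, ?_⟩, ⟨?_, ?_⟩, ⟨?_, ?_⟩, ⟨?_, ?_⟩, ⟨?_, ?_⟩, ⟨?_, ?_⟩, ⟨?_, ?_⟩, ?_, ⟨?_, ?_⟩⟩ <;>
            linarith
        · by_cases hb4 : V < V4
          · have hQv : Q = -Qmax * (V - V3) / (V4 - V3) := by
              rw [hfQ]; unfold voltVarDroop
              rw [if_neg hb1, if_neg hb2, if_neg hb3, if_pos hb4]
            have hQv' : Q + Qmax * (V - V3) / (V4 - V3) = 0 := by rw [hQv]; ring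
            have hlo : V3 ≤ V := not_lt.1 hb3
            refine ⟨1, 1, 1, 0, 1, Or.inr rfl, Or.inr rfl, Or.inr rfl, Or.inl rfl, Or.inr rfl,
              by norm_num, ?_⟩
            unfold BigMConstraints
            refine ⟨?_, ⟨?_, ?_⟩, ⟨?_, ?_⟩, ⟨?_, ?_⟩, ⟨?_, ?_⟩, ⟨?_, ?_⟩, ⟨?_, ?_⟩, ⟨?_, ?_⟩, ?_, ⟨?_, ?_⟩⟩ <;>
              linarith
          · have hQv : Q = -Qmax := by
              rw [hfQ]; unfold voltVarDroop
              rw [if_neg hb1, if_neg hb2, if_neg hb3, if_neg hb4]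
            have hlo : V4 ≤ V := not_lt.1 hb4
            refine ⟨1, 1, 1, 1, 0, Or.inr rfl, Or.inr rfl, Or.inr rfl, Or.inr rfl, Or.inl rfl,
              by norm_num, ?_⟩
            unfold BigMConstraints
            refine ⟨?_, ⟨?_, ?_⟩, ⟨?_, ?_⟩, ⟨?_, ?_⟩, ⟨?_, ?_⟩, ⟨?_, ?_⟩, ⟨?_, ?_⟩, ⟨?_, ?_⟩, ?_, ⟨?_, ?_⟩⟩ <;>
              linarith
end

section
/- Let (Vr0, Vim0) be a pair of real numbers with (Vr0, Vim0) ≠ (0, 0). For all real numbers Vr, Vim, the error of the linearized voltage magnitude satisfies 0 ≤ √(Vr² + Vim²) − (Vr0·Vr + Vim0·Vim)/√(Vr0² + Vim0²) ≤ ((Vr − Vr0)² + (Vim − Vim0)²)/(2·√(Vr0² + Vim0²)). That is, the first-order approximation (11) of the voltage magnitude has an error that is nonnegative and at most quadratic in the distance from the linearization point. -/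
/-- the error of the linearized voltage magnitude (11) is nonnegative
and at most quadratic in the distance from the linearization point. -/
theorem voltage_magnitude_linearization_error_bound
    (Vr0 Vim0 : ℝ) (h0 : (Vr0, Vim0) ≠ ((0 : ℝ), (0 : ℝ))) :
    ∀ Vr Vim : ℝ,
      0 ≤ Real.sqrt (Vr ^ 2 + Vim ^ 2)
          - (Vr0 * Vr + Vim0 * Vim) / Real.sqrt (Vr0 ^ 2 + Vim0 ^ 2) ∧
      Real.sqrt (Vr ^ 2 + Vim ^ 2)
          - (Vr0 * Vr + Vim0 * Vim) / Real.sqrt (Vr0 ^ 2 + Vim0 ^ 2)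
        ≤ ((Vr - Vr0) ^ 2 + (Vim - Vim0) ^ 2)
            / (2 * Real.sqrt (Vr0 ^ 2 + Vim0 ^ 2)) := by
  intro Vr Vim
  have hne : Vr0 ≠ 0 ∨ Vim0 ≠ 0 := by
    by_contra h
    push_neg at h
    exact h0 (by simp [h.1, h.2])
  have h1 : 0 < Vr0 ^ 2 + Vim0 ^ 2 := by
    rcases hne with h | h <;> positivity
  set n0 := Real.sqrt (Vr0 ^ 2 + Vim0 ^ 2) with hn0def
  set n := Real.sqrt (Vr ^ 2 + Vim ^ 2) with hndef
  have hn0 : 0 < n0 := Real.sqrt_pos.mpr h1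
  have hn0sq : n0 ^ 2 = Vr0 ^ 2 + Vim0 ^ 2 := Real.sq_sqrt h1.le
  have hn : 0 ≤ n := Real.sqrt_nonneg _
  have hnsq : n ^ 2 = Vr ^ 2 + Vim ^ 2 := Real.sq_sqrt (by positivity)
  have hdot : Vr0 * Vr + Vim0 * Vim ≤ n0 * n := by
    nlinarith [sq_nonneg (Vr0 * Vim - Vim0 * Vr),
      sq_nonneg (n0 * n - (Vr0 * Vr + Vim0 * Vim)),
      sq_nonneg (n0 * n + (Vr0 * Vr + Vim0 * Vim)),
      mul_nonneg hn0.le hn]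
  constructor
  · have : (Vr0 * Vr + Vim0 * Vim) / n0 ≤ n :=
      (div_le_iff₀ hn0).mpr (by nlinarith)
    linarith
  · have key : 2 * n0 * n - 2 * (Vr0 * Vr + Vim0 * Vim)
        ≤ (Vr - Vr0) ^ 2 + (Vim - Vim0) ^ 2 := by
      nlinarith [sq_nonneg (n - n0)]
    have heq : n - (Vr0 * Vr + Vim0 * Vim) / n0
        = (n * n0 - (Vr0 * Vr + Vim0 * Vim)) / n0 := by
      field_simp
    rw [heq, div_le_div_iff₀ hn0 (by positivity)]
    nlinarith [mul_le_mul_of_nonneg_left key hn0.le]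
end
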